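/- If A = ⟨a_α : α < ω₁⟩ is a proper coherent sequence of subsets of ℕ that has the ScP, then the subspace ω₁ = {α : α < ω₁} of the space (ω₁+1, τ(A)) is countably compact: every countably infinite subset of ω₁ has an accumulation point in ω₁. -/

import Mathlib

open Set

noncomputable section

/-- The least uncountable ordinal `ω₁`. -/
def omega1 : Ordinal := (Cardinal.aleph 1).ord

/-- `⋃_{γ ∈ F} a_γ` for a finite set `F` of indices. -/
def unionFin (a : Ordinal → Set ℕ) (F : Finset Ordinal) : Set ℕ :=
  ⋃ γ ∈ F, a γ

/-- A sequence of subsets of `ℕ`, with indices from a (downward closed) domain `D`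
of ordinals, is coherent if for all `α ≤ β` in the domain there is a finite `F ⊆ α`
with `a α ∩ a β ⊆ ⋃_{γ∈F} a γ` or `a α ⊆ a β ∪ ⋃_{γ∈F} a γ`. -/
def CoherentOn (D : Set Ordinal) (a : Ordinal → Set ℕ) : Prop :=
  ∀ α β : Ordinal, α ≤ β → β ∈ D →
    ∃ F : Finset Ordinal, (∀ γ ∈ F, γ < α) ∧
      (a α ∩ a β ⊆ unionFin a F ∨ a α ⊆ a β ∪ unionFin a F)

/-- Properness: no `a β` is contained in a finite union of earlier terms. -/
def ProperOn (D : Set Ordinal) (a : Ordinal → Set ℕ) : Prop :=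
  ∀ β ∈ D, ∀ F : Finset Ordinal, (∀ γ ∈ F, γ < β) → ¬ a β ⊆ unionFin a F

/-- `â_β = { α ≤ β : a α ∖ a β ⊆ ⋃_{γ∈F} a γ for some finite F ⊆ α }`. -/
def hatA (a : Ordinal → Set ℕ) (β : Ordinal) : Set Ordinal :=
  { α | α ≤ β ∧ ∃ F : Finset Ordinal, (∀ γ ∈ F, γ < α) ∧ a α \ a β ⊆ unionFin a F }

/-- The topology `τ(A)` on `λ + 1 = {α : α ≤ λ}` generated by the subbase
consisting of the sets `â_β` and their complements, `β < λ`. -/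
def tau (lam : Ordinal) (a : Ordinal → Set ℕ) :
    TopologicalSpace {α : Ordinal // α ≤ lam} :=
  TopologicalSpace.generateFrom
    { s | ∃ β < lam, s = {x : {α : Ordinal // α ≤ lam} | x.1 ∈ hatA a β} ∨
                     s = {x : {α : Ordinal // α ≤ lam} | x.1 ∈ hatA a β}ᶜ }

/-- The subspace `ω₁ = {α : α < ω₁}` of `(ω₁+1, τ(A))`. -/
def tauSub (a : Ordinal → Set ℕ) : TopologicalSpace {y : Ordinal // y < omega1} :=
  TopologicalSpace.induced
    (fun y : {y : Ordinal // y < omega1} => (⟨y.1, y.2.le⟩ : {α : Ordinal // α ≤ omega1}))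
    (tau omega1 a)

/-- Closed unbounded subsets of `ω₁`. -/
def IsClub' (C : Set Ordinal) : Prop :=
  C ⊆ Iio omega1 ∧
  (∀ α < omega1, ∃ β ∈ C, α ≤ β) ∧
  (∀ δ, δ < omega1 → δ ≠ 0 → (∀ α < δ, ∃ β ∈ C, α < β ∧ β < δ) → δ ∈ C)

/-- Stationary subsets of `ω₁`: sets meeting every club. -/
def IsStationary' (S : Set Ordinal) : Prop :=
  ∀ C : Set Ordinal, IsClub' C → (S ∩ C).Nonempty

/-- The stationary covering property for a coherent sequence whose index domain is `D`:
if the sequence has length `ω₁` (i.e. `Iio ω₁ ⊆ D`), then every stationary `S ⊆ ω₁`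
together with some finite `F` covers, i.e. `⋃_{γ ∈ S ∪ F} â_γ = ω₁`.  (Sequences of
length `< ω₁` have the ScP by convention.) -/
def HasScP (D : Set Ordinal) (a : Ordinal → Set ℕ) : Prop :=
  Iio omega1 ⊆ D →
    ∀ S : Set Ordinal, S ⊆ Iio omega1 → IsStationary' S →
      ∃ F : Finset Ordinal, (⋃ γ ∈ S ∪ (↑F : Set Ordinal), hatA a γ) = Iio omega1

/-- A node of the tree `2^{≤ω₁}`: a function `val` defined on the ordinals `< len`
(with the canonical value `false` beyond `len`). -/
structure Node where
  len : Ordinal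
  val : Ordinal → Bool
  canon : ∀ α, len ≤ α → val α = false

open Classical in
/-- The restriction `x ↾ β`. -/
def Node.restrict (x : Node) (β : Ordinal) : Node where
  len := β
  val := fun α => if α < β then x.val α else false
  canon := fun α h => if_neg (not_lt.2 h)

/-- `τ.Extends σ` means `σ ⊆ τ`, i.e. `τ` extends `σ`. -/
def Node.Extends (τ σ : Node) : Prop :=
  σ.len ≤ τ.len ∧ ∀ α < σ.len, τ.val α = σ.val α

/-- Successor ordinals. -/
def IsSucc (o : Ordinal) : Prop := ∃ β, o = β + 1

open Classical in
/-- `σ†`: if `σ` has successor length `β+1`, the node agreeing with `σ` except at `β`;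
otherwise `σ` itself. -/
def Node.dagger (σ : Node) : Node :=
  if h : IsSucc σ.len then
    { len := σ.len
      val := fun α => if α = Classical.choose h then !(σ.val α) else σ.val α
      canon := by
        intro α hα
        have hs := Classical.choose_spec h
        have hne : α ≠ Classical.choose h := by
          intro he
          rw [hs, he] at hα
          rw [Ordinal.add_one_eq_succ] at hα
          exact absurd hα (not_le.2 (Order.lt_succ (Classical.choose h)))
        show (if α = Classical.choose h then !(σ.val α) else σ.val α) = false
        rw [if_neg hne]
        exact σ.canon α hα }
  else σ

open Classical in
/-- `σ ⌢ b` : the node `σ` extended by one value `b`. -/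
def Node.snoc (σ : Node) (b : Bool) : Node where
  len := σ.len + 1
  val := fun α => if α = σ.len then b else σ.val α
  canon := by
    intro α hα
    have h1 : σ.len < α := by
      have h2 : σ.len < σ.len + 1 := by
        rw [Ordinal.add_one_eq_succ]; exact Order.lt_succ σ.len
      exact lt_of_lt_of_le h2 hα
    show (if α = σ.len then b else σ.val α) = false
    rw [if_neg h1.ne']
    exact σ.canon α h1.le

open Classical in
/-- `x ⌢ σ` : concatenation of nodes. -/
def Node.append (x σ : Node) : Node where
  len := x.len + σ.len
  val := fun α => if α < x.len then x.val α else σ.val (α - x.len)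
  canon := by
    intro α hα
    have h1 : ¬ α < x.len := not_lt.2 (le_trans (le_self_add (a := x.len) (b := σ.len)) hα)
    show (if α < x.len then x.val α else σ.val (α - x.len)) = false
    rw [if_neg h1]
    apply σ.canon
    by_contra h2
    rw [not_le] at h2
    have h3 : α ≤ x.len + (α - x.len) := Ordinal.le_add_sub α x.len
    have h4 : x.len + (α - x.len) < x.len + σ.len := add_lt_add_of_le_of_lt (le_refl x.len) h2
    exact absurd hα (not_le.2 (lt_of_le_of_lt h3 h4))

/-- A subtree of `2^{<ω₁}` that is downward closed, twinned and has no maximal elements. -/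
structure GoodTree (Γ : Set Node) : Prop where
  lt_omega1 : ∀ σ ∈ Γ, σ.len < omega1
  downward : ∀ σ ∈ Γ, ∀ β ≤ σ.len, σ.restrict β ∈ Γ
  twinned : ∀ σ ∈ Γ, σ.dagger ∈ Γ
  noMax : ∀ σ ∈ Γ, ∃ τ ∈ Γ, σ.len < τ.len ∧ τ.Extends σ

/-- `X(Γ)`: the maximal branches of `Γ`, i.e. the minimal elements of `2^{≤ω₁} ∖ Γ`. -/
def XGamma (Γ : Set Node) : Set Node :=
  { x | x.len ≤ omega1 ∧ x ∉ Γ ∧ ∀ β < x.len, x.restrict β ∈ Γ }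

/-- The index domain of the branch sequence `A_{Γ,x}`. -/
def branchDomain (Γ : Set Node) (x : Node) : Set Ordinal :=
  { α | α + 1 ≤ x.len ∧ x.restrict (α + 1) ∈ Γ }

/-- The branch sequence `A_{Γ,x}`, `a^x_α = a_{x ↾ (α+1)}`. -/
def branchSeq (a : Node → Set ℕ) (x : Node) : Ordinal → Set ℕ :=
  fun α => a (x.restrict (α + 1))

/-- A `𝕋`-algebra on the tree `Γ`. -/
structure IsTAlgebra (Γ : Set Node) (a : Node → Set ℕ) : Prop where
  tree : GoodTree Γ
  empty_of_not_succ : ∀ σ ∈ Γ, ¬ IsSucc σ.len → a σ = ∅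
  compl_dagger : ∀ σ ∈ Γ, IsSucc σ.len → a σ.dagger = (a σ)ᶜ
  branch_coherent : ∀ x : Node, x.len ≤ omega1 →
    CoherentOn (branchDomain Γ x) (branchSeq a x)
  branch_proper : ∀ x : Node, x.len ≤ omega1 →
    ProperOn (branchDomain Γ x) (branchSeq a x)

/-- The Boolean subalgebra of `P(ℕ)` generated by a family `G`. -/
inductive GenBool (G : Set (Set ℕ)) : Set ℕ → Prop
  | basic (s : Set ℕ) : s ∈ G → GenBool G s
  | empty : GenBool G ∅
  | compl (s : Set ℕ) : GenBool G s → GenBool G sᶜ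
  | inter (s t : Set ℕ) : GenBool G s → GenBool G t → GenBool G (s ∩ t)

/-- `B_Γ`: the Boolean subalgebra of `P(ℕ)` generated by `{a_σ : σ ∈ Γ}`. -/
def BGamma (Γ : Set Node) (a : Node → Set ℕ) : Set (Set ℕ) :=
  { b | GenBool { s | ∃ σ ∈ Γ, s = a σ } b }

/-- A finite intersection from the family `{ℕ ∖ a_{x↾(α+1)} : α + 1 ≤ λ_x}`. -/
def finInterCompl (a : Node → Set ℕ) (x : Node) (F : Finset Ordinal) : Set ℕ :=
  ⋂ α ∈ F, (a (x.restrict (α + 1)))ᶜ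

/-- The ultrafilter `U_x` on `B_Γ` generated by the finite intersections of
`{ℕ ∖ a_{x↾(α+1)} : α + 1 ≤ λ_x}`. -/
def Ux (Γ : Set Node) (a : Node → Set ℕ) (x : Node) : Set (Set ℕ) :=
  { b | b ∈ BGamma Γ a ∧
    ∃ F : Finset Ordinal, (∀ α ∈ F, α + 1 ≤ x.len) ∧ finInterCompl a x F ⊆ b }

/-- The Stone topology on `X(Γ)`, with subbasic open sets `{z : b ∈ U_z}`, `b ∈ B_Γ`. -/
def stoneTop (Γ : Set Node) (a : Node → Set ℕ) :
    TopologicalSpace {z : Node // z ∈ XGamma Γ} :=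
  TopologicalSpace.generateFrom
    { s | ∃ b ∈ BGamma Γ a, s = { z : {z : Node // z ∈ XGamma Γ} | b ∈ Ux Γ a z.1 } }

/-- An ultrafilter on a Boolean subalgebra `B` of `P(ℕ)`. -/
def IsUltrafilterOn (B U : Set (Set ℕ)) : Prop :=
  U ⊆ B ∧
  (∀ s ∈ U, ∀ t ∈ U, s ∩ t ∈ U) ∧
  (∀ s ∈ U, ∀ t ∈ B, s ⊆ t → t ∈ U) ∧
  ∅ ∉ U ∧
  (∀ b ∈ B, Xor' (b ∈ U) (bᶜ ∈ U))

/-- The length-lexicographic (strict) order on finite binary strings. -/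
def LenLexLT (σ τ : Node) : Prop :=
  σ.len < τ.len ∨ (σ.len = τ.len ∧ ∃ i < σ.len, σ.val i = false ∧ τ.val i = true ∧
    ∀ j < i, σ.val j = τ.val j)

/-- `e` is the standard length-lexicographic enumeration of `2^{<ω}`. -/
def IsStdEnum (e : ℕ → Node) : Prop :=
  (∀ k, (e k).len < Ordinal.omega0) ∧
  (∀ σ : Node, σ.len < Ordinal.omega0 → ∃ k, e k = σ) ∧
  (∀ k l : ℕ, k < l → LenLexLT (e k) (e l))

/-- `⋃_{k<n} c^x_k` where `c^x_n = a^x_{e(n)} ∖ ⋃_{k<n} c^x_k` (recursively). -/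
def cUnion (a : Node → Set ℕ) (x : Node) (eb : ℕ → Ordinal) : ℕ → Set ℕ
  | 0 => ∅
  | n + 1 => cUnion a x eb n ∪ (a (x.restrict (eb n + 1)) \ cUnion a x eb n)

/-- `c^x_n = a^x_{e(n)} ∖ ⋃_{k<n} c^x_k`. -/
def cSeq (a : Node → Set ℕ) (x : Node) (eb : ℕ → Ordinal) (n : ℕ) : Set ℕ :=
  a (x.restrict (eb n + 1)) \ cUnion a x eb n

/-- `{x ⌢ σ : σ ∈ 2^{<ω}}`. -/
def appendSet (x : Node) : Set Node :=
  { τ | ∃ σ : Node, σ.len < Ordinal.omega0 ∧ τ = x.append σ }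

/-- The defining equations of the extension `A_Γ[π,x]`:
`a_x = ∅`, `a_{x⌢(σ⌢0)} = ⋃{c^x_k : σ⌢1 ⊆ σ_{π(k)}}`, `a_{x⌢(σ⌢1)} = ℕ ∖ a_{x⌢(σ⌢0)}`. -/
def ExtEquations (e : ℕ → Node) (π : ℕ → ℕ) (a : Node → Set ℕ) (x : Node)
    (eb : ℕ → Ordinal) (a' : Node → Set ℕ) : Prop :=
  a' x = ∅ ∧
  ∀ σ : Node, σ.len < Ordinal.omega0 →
    (a' (x.append (σ.snoc false)) =
      ⋃ k ∈ { k : ℕ | (e (π k)).Extends (σ.snoc true) }, cSeq a x eb k) ∧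
    (a' (x.append (σ.snoc true)) = (a' (x.append (σ.snoc false)))ᶜ)

/-- The full tree `2^{<ω₁}`. -/
def GammaFull : Set Node := { σ | σ.len < omega1 }

theorem natLtOmega1 (n : ℕ) : (n : Ordinal) < omega1 := by
  have h1 : (n : Ordinal) < Ordinal.omega0 := Ordinal.nat_lt_omega0 n
  have h2 : Ordinal.omega0 < omega1 := by
    rw [omega1, ← Cardinal.ord_aleph0]
    exact Cardinal.ord_lt_ord.2 (by rw [← Cardinal.aleph_zero]
                                    exact Cardinal.aleph_lt_aleph.2 zero_lt_one)
  exact h1.trans h2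


section Aux

open Classical

lemma mem_unionFin {a : Ordinal → Set ℕ} {F : Finset Ordinal} {n : ℕ} :
    n ∈ unionFin a F ↔ ∃ γ ∈ F, n ∈ a γ := by
  simp [unionFin]

lemma unionFin_mono {a : Ordinal → Set ℕ} {F G : Finset Ordinal} (h : F ⊆ G) :
    unionFin a F ⊆ unionFin a G := by
  intro n hn
  rcases mem_unionFin.1 hn with ⟨γ, hγ, hnγ⟩
  exact mem_unionFin.2 ⟨γ, h hγ, hnγ⟩

lemma mem_hatA_self (a : Ordinal → Set ℕ) (β : Ordinal) : β ∈ hatA a β := by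
  refine ⟨le_rfl, ∅, by simp, ?_⟩
  simp

lemma omega1_isLimit : Order.IsSuccLimit omega1 :=
  Cardinal.isSuccLimit_ord (le_of_lt Cardinal.aleph0_lt_aleph_one)

lemma omega1_pos : (0 : Ordinal) < omega1 :=
  omega1_isLimit.pos

lemma succ_lt_omega1 {α : Ordinal} (h : α < omega1) : α + 1 < omega1 := by
  rw [Ordinal.add_one_eq_succ]
  exact omega1_isLimit.succ_lt h

lemma iSup_lt_omega1 (f : ℕ → Ordinal) (hf : ∀ n, f n < omega1) :
    (⨆ n, f n) < omega1 := by
  exact Cardinal.iSup_lt_ord_lift_of_isRegular Cardinal.isRegular_aleph_one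
    (by simpa using Cardinal.aleph0_lt_aleph_one) hf

/-- The dichotomy: if `α ≤ γ < ω₁` and `α ∉ â_γ` then `a α ∩ a γ` is covered by
finitely many earlier sets. -/
lemma dich {a : Ordinal → Set ℕ} (hcoh : CoherentOn (Iio omega1) a)
    {α γ : Ordinal} (hle : α ≤ γ) (hγ : γ < omega1) (h : α ∉ hatA a γ) :
    ∃ F : Finset Ordinal, (∀ ξ ∈ F, ξ < α) ∧ a α ∩ a γ ⊆ unionFin a F := by
  rcases hcoh α γ hle hγ with ⟨F, hF, h1 | h2⟩
  · exact ⟨F, hF, h1⟩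
  · exact absurd ⟨hle, F, hF, fun n hn => (h2 hn.1).resolve_left hn.2⟩ h

/-- The workhorse: if `a α` is covered by `⋃_{ξ ∈ H} a ξ ∪ s` with `s` small below
`α`, then `α ∈ â_ξ` for some `ξ ∈ H`. -/
lemma cover_lemma {a : Ordinal → Set ℕ} (hcoh : CoherentOn (Iio omega1) a)
    (hprop : ProperOn (Iio omega1) a)
    {α : Ordinal} (hα : α < omega1) {H : Finset Ordinal} (hH : ∀ ξ ∈ H, ξ < omega1)
    {F₀ : Finset Ordinal} (hF₀ : ∀ γ ∈ F₀, γ < α)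
    (hcov : a α ⊆ unionFin a H ∪ unionFin a F₀) :
    ∃ ξ ∈ H, α ∈ hatA a ξ := by
  by_contra hcon
  push_neg at hcon
  have key : ∀ ξ ∈ H, ∃ G : Finset Ordinal, (∀ γ ∈ G, γ < α) ∧ a α ∩ a ξ ⊆ unionFin a G := by
    intro ξ hξ
    rcases lt_or_ge ξ α with h1 | h2
    · refine ⟨{ξ}, by simpa using h1, ?_⟩
      intro n hn
      exact mem_unionFin.2 ⟨ξ, Finset.mem_singleton_self ξ, hn.2⟩
    · exact dich hcoh h2 (hH ξ hξ) (hcon ξ hξ)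
  choose G hG1 hG2 using key
  classical
  set Fbig : Finset Ordinal := F₀ ∪ H.attach.biUnion (fun x => G x.1 x.2) with hFbig
  apply hprop α hα Fbig
  · intro γ hγ
    rcases Finset.mem_union.1 hγ with h | h
    · exact hF₀ γ h
    · rcases Finset.mem_biUnion.1 h with ⟨x, _, hx⟩
      exact hG1 x.1 x.2 γ hx
  · intro n hn
    rcases hcov hn with h | h
    · rcases mem_unionFin.1 h with ⟨ξ, hξ, hnξ⟩
      have hsub : G ξ hξ ⊆ Fbig := fun γ hγ => Finset.mem_union.2
        (Or.inr (Finset.mem_biUnion.2 ⟨⟨ξ, hξ⟩, H.mem_attach _, hγ⟩))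
      exact unionFin_mono hsub (hG2 ξ hξ ⟨hn, hnξ⟩)
    · exact unionFin_mono Finset.subset_union_left h

end Aux
/-- Trace lemma, positive case. -/
lemma traceP {a : Ordinal → Set ℕ} (hcoh : CoherentOn (Iio omega1) a)
    (hprop : ProperOn (Iio omega1) a)
    (X : Set {α : Ordinal // α ≤ omega1}) {β γ : Ordinal}
    (hβ : β < omega1) (hγ : γ < omega1)
    (hmin : ∀ ξ, ξ < β → {x | x ∈ X ∧ x.1 ∈ hatA a ξ}.Finite)
    (hmem : β ∈ hatA a γ) :
    {x | x ∈ X ∧ x.1 ∈ hatA a β ∧ x.1 ∉ hatA a γ}.Finite := by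
  obtain ⟨hβγ, H, hH, hHsub⟩ := hmem
  have hsub : {x | x ∈ X ∧ x.1 ∈ hatA a β ∧ x.1 ∉ hatA a γ} ⊆
      ⋃ ξ ∈ H, {x | x ∈ X ∧ x.1 ∈ hatA a ξ} := by
    rintro x ⟨hxX, hxβ, hxγ⟩
    obtain ⟨hαβ, F₁, hF₁, hF₁sub⟩ := hxβ
    obtain ⟨F₂, hF₂, hF₂sub⟩ := dich hcoh (hαβ.trans hβγ) hγ hxγ
    have hα : x.1 < omega1 := lt_of_le_of_lt hαβ hβ
    have hcov : a x.1 ⊆ unionFin a H ∪ unionFin a (F₁ ∪ F₂) := by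
      intro n hn
      by_cases h1 : n ∈ a γ
      · exact Or.inr (unionFin_mono Finset.subset_union_right (hF₂sub ⟨hn, h1⟩))
      · by_cases h2 : n ∈ a β
        · exact Or.inl (hHsub ⟨h2, h1⟩)
        · exact Or.inr (unionFin_mono Finset.subset_union_left (hF₁sub ⟨hn, h2⟩))
    have hF₁₂ : ∀ δ ∈ F₁ ∪ F₂, δ < x.1 := by
      intro δ hδ
      rcases Finset.mem_union.1 hδ with h | h
      · exact hF₁ δ h
      · exact hF₂ δ h
    obtain ⟨ξ, hξH, hξhat⟩ := cover_lemma hcoh hprop hα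
      (fun ξ hξ => (hH ξ hξ).trans hβ) hF₁₂ hcov
    exact Set.mem_biUnion hξH ⟨hxX, hξhat⟩
  exact (Set.Finite.biUnion H.finite_toSet
    (fun ξ hξ => hmin ξ (hH ξ hξ))).subset hsub

/-- Trace lemma, negative case. -/
lemma traceN {a : Ordinal → Set ℕ} (hcoh : CoherentOn (Iio omega1) a)
    (hprop : ProperOn (Iio omega1) a)
    (X : Set {α : Ordinal // α ≤ omega1}) {β γ : Ordinal}
    (hβ : β < omega1) (hγ : γ < omega1)
    (hmin : ∀ ξ, ξ < β → {x | x ∈ X ∧ x.1 ∈ hatA a ξ}.Finite)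
    (hmem : β ∉ hatA a γ) :
    {x | x ∈ X ∧ x.1 ∈ hatA a β ∧ x.1 ∈ hatA a γ}.Finite := by
  rcases lt_or_ge γ β with hlt | hle
  · exact (hmin γ hlt).subset (fun x hx => ⟨hx.1, hx.2.2⟩)
  · obtain ⟨H, hH, hHsub⟩ := dich hcoh hle hγ hmem
    have hsub : {x | x ∈ X ∧ x.1 ∈ hatA a β ∧ x.1 ∈ hatA a γ} ⊆
        ⋃ ξ ∈ H, {x | x ∈ X ∧ x.1 ∈ hatA a ξ} := by
      rintro x ⟨hxX, hxβ, hxγ⟩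
      obtain ⟨hαβ, F₁, hF₁, hF₁sub⟩ := hxβ
      obtain ⟨hαγ, F₂, hF₂, hF₂sub⟩ := hxγ
      have hα : x.1 < omega1 := lt_of_le_of_lt hαβ hβ
      have hcov : a x.1 ⊆ unionFin a H ∪ unionFin a (F₁ ∪ F₂) := by
        intro n hn
        by_cases h2 : n ∈ a β
        · by_cases h1 : n ∈ a γ
          · exact Or.inl (hHsub ⟨h2, h1⟩)
          · exact Or.inr (unionFin_mono Finset.subset_union_right (hF₂sub ⟨hn, h1⟩))
        · exact Or.inr (unionFin_mono Finset.subset_union_left (hF₁sub ⟨hn, h2⟩))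
      have hF₁₂ : ∀ δ ∈ F₁ ∪ F₂, δ < x.1 := by
        intro δ hδ
        rcases Finset.mem_union.1 hδ with h | h
        · exact hF₁ δ h
        · exact hF₂ δ h
      obtain ⟨ξ, hξH, hξhat⟩ := cover_lemma hcoh hprop hα
        (fun ξ hξ => (hH ξ hξ).trans hβ) hF₁₂ hcov
      exact Set.mem_biUnion hξH ⟨hxX, hξhat⟩
    exact (Set.Finite.biUnion H.finite_toSet
      (fun ξ hξ => hmin ξ (hH ξ hξ))).subset hsub

/-- The intersection of countably many clubs is a club. -/
lemma club_iInter (C : ℕ → Set Ordinal) (h : ∀ k, IsClub' (C k)) :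
    IsClub' (⋂ k, C k) := by
  have hex : ∀ (k : ℕ) (η : Ordinal), ∃ β,
      η < omega1 → (β ∈ C k ∧ η < β ∧ β < omega1) := by
    intro k η
    by_cases hη : η < omega1
    · obtain ⟨β, hβC, hβge⟩ := (h k).2.1 (η + 1) (succ_lt_omega1 hη)
      have hηβ : η < β := lt_of_lt_of_le (by
        rw [Ordinal.add_one_eq_succ]; exact Order.lt_succ η) hβge
      exact ⟨β, fun _ => ⟨hβC, hηβ, (h k).1 hβC⟩⟩
    · exact ⟨0, fun hc => absurd hc hη⟩
  choose gg hgg using hex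
  refine ⟨fun x hx => (h 0).1 (Set.mem_iInter.1 hx 0), ?_, ?_⟩
  · intro α hα
    let s : ℕ → Ordinal := fun m => Nat.rec α (fun _ prev => ⨆ k, gg k prev) m
    have hslt : ∀ m, s m < omega1 := by
      intro m
      induction m with
      | zero => exact hα
      | succ m ih => exact iSup_lt_omega1 _ (fun k => (hgg k (s m) ih).2.2)
    have hsmono : ∀ m, s m < s (m + 1) := fun m =>
      lt_of_lt_of_le (hgg 0 (s m) (hslt m)).2.1 (Ordinal.le_iSup _ 0)
    set δ := ⨆ m, s m with hδdef
    have hδ : δ < omega1 := iSup_lt_omega1 _ hslt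
    have hsleδ : ∀ m, s m ≤ δ := Ordinal.le_iSup s
    have hδne : δ ≠ 0 := by
      have : (0 : Ordinal) < δ :=
        lt_of_le_of_lt (zero_le (a := s 0)) (lt_of_lt_of_le (hsmono 0) (hsleδ 1))
      exact this.ne'
    have hδmem : ∀ k, δ ∈ C k := by
      intro k
      apply (h k).2.2 δ hδ hδne
      intro η hη
      obtain ⟨m, hm⟩ := Ordinal.lt_iSup_iff.1 hη
      refine ⟨gg k (s m), (hgg k (s m) (hslt m)).1,
        lt_trans hm (hgg k (s m) (hslt m)).2.1, ?_⟩
      have h1 : gg k (s m) ≤ s (m + 1) := Ordinal.le_iSup (fun k => gg k (s m)) k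
      exact lt_of_le_of_lt h1 (lt_of_lt_of_le (hsmono (m + 1)) (hsleδ (m + 2)))
    exact ⟨δ, Set.mem_iInter.2 hδmem, hsleδ 0⟩
  · intro δ h1 h2 h3
    refine Set.mem_iInter.2 (fun k => (h k).2.2 δ h1 h2 (fun η hη => ?_))
    obtain ⟨β, hβ, hh⟩ := h3 η hη
    exact ⟨β, Set.mem_iInter.1 hβ k, hh⟩
/-- Every countably infinite set in `ω₁` has a `β < ω₁` whose trace on it is infinite. -/
lemma exists_infinite_trace {a : Ordinal → Set ℕ} (hScP : HasScP (Iio omega1) a)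
    (X : Set {α : Ordinal // α ≤ omega1}) (hXsub : ∀ x ∈ X, x.1 < omega1)
    (hXinf : X.Infinite) :
    ∃ β, β < omega1 ∧ {x | x ∈ X ∧ x.1 ∈ hatA a β}.Infinite := by
  by_contra hcon
  push_neg at hcon
  have hfin : ∀ β, β < omega1 → {x | x ∈ X ∧ x.1 ∈ hatA a β}.Finite :=
    fun β h => hcon β h
  let g : ℕ ↪ X := Set.Infinite.natEmbedding X hXinf
  let p : ℕ → ℕ → X := fun k n => g (Nat.pair k n)
  have hpinj : ∀ k₁ n₁ k₂ n₂, p k₁ n₁ = p k₂ n₂ → k₁ = k₂ ∧ n₁ = n₂ := by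
    intro k₁ n₁ k₂ n₂ hp
    have := g.injective hp
    have h2 := congrArg Nat.unpair this
    rw [Nat.unpair_pair, Nat.unpair_pair] at h2
    exact ⟨congrArg Prod.fst h2, congrArg Prod.snd h2⟩
  let U : ℕ → Set Ordinal := fun k => ⋃ n, {γ | (p k n : {α : Ordinal // α ≤ omega1}).1 ∈ hatA a γ}
  by_cases hc : ∀ k, ∃ C, IsClub' C ∧ C ⊆ U k
  · choose C hC hCU using hc
    have hclub := club_iInter C hC
    obtain ⟨γ, hγmem, -⟩ := hclub.2.1 0 omega1_pos
    have hγω : γ < omega1 := hclub.1 hγmem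
    have hk : ∀ k, ∃ n, ((p k n : X) : {α : Ordinal // α ≤ omega1}).1 ∈ hatA a γ := by
      intro k
      have : γ ∈ U k := hCU k (Set.mem_iInter.1 hγmem k)
      exact Set.mem_iUnion.1 this
    choose nn hnn using hk
    refine (hfin γ hγω).not_infinite ?_
    refine Set.infinite_of_injective_forall_mem
      (f := fun k => ((p k (nn k) : X) : {α : Ordinal // α ≤ omega1})) ?_ ?_
    · intro k₁ k₂ hkk
      exact (hpinj _ _ _ _ (Subtype.coe_injective hkk)).1
    · intro k
      exact ⟨(p k (nn k)).2, hnn k⟩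
  · push_neg at hc
    obtain ⟨k, hk⟩ := hc
    set S : Set Ordinal := Iio omega1 \ U k with hSdef
    have hSstat : IsStationary' S := by
      intro Cl hCl
      by_contra hne
      rw [Set.not_nonempty_iff_eq_empty] at hne
      refine hk Cl hCl ?_
      intro x hx
      by_contra hxU
      have : x ∈ S ∩ Cl := ⟨⟨hCl.1 hx, hxU⟩, hx⟩
      rw [hne] at this
      exact this
    obtain ⟨F, hF⟩ := hScP (le_refl _) S Set.diff_subset hSstat
    have hxn : ∀ n : ℕ, ∃ γ ∈ F,
        ((p k n : X) : {α : Ordinal // α ≤ omega1}).1 ∈ hatA a γ := by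
      intro n
      have hmem : ((p k n : X) : {α : Ordinal // α ≤ omega1}).1 ∈ Iio omega1 :=
        hXsub _ (p k n).2
      rw [← hF] at hmem
      simp only [Set.mem_iUnion, exists_prop] at hmem
      obtain ⟨γ, hγ, hmemγ⟩ := hmem
      rcases hγ with hγS | hγF
      · exfalso
        have : γ ∈ U k := Set.mem_iUnion.2 ⟨n, hmemγ⟩
        exact hγS.2 this
      · exact ⟨γ, hγF, hmemγ⟩
    choose c hcF hchat using hxn
    have hpig : ∃ γ ∈ F, {n | c n = γ}.Infinite := by
      by_contra hno
      push_neg at hno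
      have hcov : (Set.univ : Set ℕ) ⊆ ⋃ γ ∈ F, {n | c n = γ} := by
        intro n _
        exact Set.mem_biUnion (hcF n) rfl
      exact Set.infinite_univ ((Set.Finite.biUnion F.finite_toSet
        (fun γ hγ => hno γ hγ)).subset hcov)
    obtain ⟨γ, hγF, hfibinf⟩ := hpig
    have hγω : γ < omega1 := by
      have : γ ∈ ⋃ γ' ∈ S ∪ (↑F : Set Ordinal), hatA a γ' :=
        Set.mem_biUnion (Or.inr hγF) (mem_hatA_self a γ)
      rw [hF] at this
      exact this
    refine (hfin γ hγω).not_infinite ?_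
    have himg := hfibinf.image
      (f := fun n => ((p k n : X) : {α : Ordinal // α ≤ omega1}))
      (fun n₁ _ n₂ _ hh => (hpinj _ _ _ _ (Subtype.coe_injective hh)).2)
    refine himg.mono ?_
    rintro x ⟨n, hn, rfl⟩
    exact ⟨(p k n).2, by rw [← hn]; exact hchat n⟩
/-- If a proper coherent sequence `A = ⟨a_α : α < ω₁⟩` has the ScP, then the
subspace `ω₁` of `(ω₁+1, τ(A))` is countably compact: every countably infinite
subset of `ω₁` has an accumulation point in `ω₁`. -/
theorem stmt9 (a : Ordinal → Set ℕ)
    (hcoh : CoherentOn (Iio omega1) a) (hprop : ProperOn (Iio omega1) a)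
    (hScP : HasScP (Iio omega1) a)
    (X : Set {α : Ordinal // α ≤ omega1}) (hXsub : ∀ x ∈ X, x.1 < omega1)
    (hXcount : X.Countable) (hXinf : X.Infinite) :
    ∃ y : {α : Ordinal // α ≤ omega1}, y.1 < omega1 ∧
      ∀ U : Set {α : Ordinal // α ≤ omega1},
        @IsOpen _ (tau omega1 a) U → y ∈ U → ∃ x ∈ X, x ≠ y ∧ x ∈ U := by
  classical
  obtain ⟨β0, hβ0, hβ0inf⟩ := exists_infinite_trace hScP X hXsub hXinf
  set SB : Set Ordinal := {β | β < omega1 ∧ {x | x ∈ X ∧ x.1 ∈ hatA a β}.Infinite}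
    with hSBdef
  have hSBne : SB.Nonempty := ⟨β0, hβ0, hβ0inf⟩
  set β : Ordinal := Ordinal.lt_wf.min SB hSBne with hβdef
  have hβmem : β ∈ SB := Ordinal.lt_wf.min_mem SB hSBne
  have hβω : β < omega1 := hβmem.1
  have hZinf : {x | x ∈ X ∧ x.1 ∈ hatA a β}.Infinite := hβmem.2
  have hmin : ∀ ξ, ξ < β → {x | x ∈ X ∧ x.1 ∈ hatA a ξ}.Finite := by
    intro ξ hξ
    by_contra hinf
    exact Ordinal.lt_wf.not_lt_min SB ⟨hξ.trans hβω, hinf⟩ hξ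
  refine ⟨⟨β, hβω.le⟩, hβω, ?_⟩
  intro U hU hyU
  letI : TopologicalSpace {α : Ordinal // α ≤ omega1} := tau omega1 a
  have hbasis := TopologicalSpace.isTopologicalBasis_of_subbasis
    (t := tau omega1 a)
    (s := { s | ∃ b < omega1,
      s = {x : {α : Ordinal // α ≤ omega1} | x.1 ∈ hatA a b} ∨
      s = {x : {α : Ordinal // α ≤ omega1} | x.1 ∈ hatA a b}ᶜ }) rfl
  obtain ⟨v, hvB, hyv, hvU⟩ := hbasis.exists_subset_of_mem_open hyU hU
  obtain ⟨T, ⟨hTfin, hTsub⟩, rfl⟩ := hvB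
  have hbad : ∀ t ∈ T,
      {x | x ∈ X ∧ x.1 ∈ hatA a β ∧ x ∉ t}.Finite := by
    intro t ht
    obtain ⟨γ, hγ, hcase⟩ := hTsub ht
    have hyt : (⟨β, hβω.le⟩ : {α : Ordinal // α ≤ omega1}) ∈ t :=
      Set.mem_sInter.1 hyv t ht
    rcases hcase with rfl | rfl
    · have hP := traceP hcoh hprop X hβω hγ hmin hyt
      exact hP.subset (fun x hx => ⟨hx.1, hx.2.1, hx.2.2⟩)
    · have hN := traceN hcoh hprop X hβω hγ hmin hyt
      exact hN.subset (fun x hx => ⟨hx.1, hx.2.1, not_not.1 hx.2.2⟩)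
  have hfinbad : (insert (⟨β, hβω.le⟩ : {α : Ordinal // α ≤ omega1})
      (⋃ t ∈ T, {x | x ∈ X ∧ x.1 ∈ hatA a β ∧ x ∉ t})).Finite := by
    refine Set.Finite.insert _ (Set.Finite.biUnion hTfin hbad)
  obtain ⟨x, ⟨hxX, hxβ⟩, hxnot⟩ := (hZinf.diff hfinbad).nonempty
  have hxne : x ≠ ⟨β, hβω.le⟩ := by
    intro hxy
    exact hxnot (by rw [hxy]; exact Set.mem_insert _ _)
  have hxT : x ∈ ⋂₀ T := by
    refine Set.mem_sInter.2 (fun t ht => ?_)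
    by_contra hxt
    exact hxnot (Set.mem_insert_of_mem _ (Set.mem_biUnion ht ⟨hxX, hxβ, hxt⟩))
  exact ⟨x, hxX, hxne, hvU hxT⟩

end
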